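/- For any polynomials A, B ∈ ℂ[y] and any x ∈ ℂ, the function B₂(x; y, s) := ((B(y)-B(s))/(y-s))·(x - 1/(y-s)) - (A(y) - B'(s) - A(s))/(y-s) extends to a polynomial in (y, s), and its value on the diagonal y = s equals x·B'(s) - (1/2)B''(s) - A'(s). -/

import Mathlib

open Polynomial

/-- Divided-difference step: `p - p(a)` is `(X - a) * q` with `q(a) = p'(a)`. -/
lemma div_step {R : Type*} [CommRing R] (p : Polynomial R) (a : R) :
    ∃ q, p - C (p.eval a) = (X - C a) * q ∧ q.eval a = (derivative p).eval a := by
  obtain ⟨q, hq⟩ := X_sub_C_dvd_sub_C_eval (a := a) (p := p)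
  refine ⟨q, hq, ?_⟩
  have h := congrArg derivative hq
  rw [derivative_sub, derivative_C, sub_zero, derivative_mul, derivative_sub,
    derivative_X, derivative_C, sub_zero, one_mul] at h
  have h2 := congrArg (eval a) h
  simp at h2
  simpa using h2.symm

lemma eval_map_C_X {p : Polynomial ℂ} :
    (p.map (C : ℂ →+* Polynomial ℂ)).eval (X : Polynomial ℂ) = p := by
  rw [eval_map]; exact eval₂_C_X

theorem concomitant_kernel_is_polynomial (A B : Polynomial ℂ) (x : ℂ) :
    ∃ P : MvPolynomial (Fin 2) ℂ,
      (∀ y s : ℂ, y ≠ s →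
        MvPolynomial.eval ![y, s] P =
          ((B.eval y - B.eval s) / (y - s)) * (x - 1 / (y - s)) -
            (A.eval y - (derivative B).eval s - A.eval s) / (y - s)) ∧
      (∀ s : ℂ,
        MvPolynomial.eval ![s, s] P =
          x * (derivative B).eval s - (derivative (derivative B)).eval s / 2 -
            (derivative A).eval s) := by
  classical
  set d : Polynomial (Polynomial ℂ) := X - C (X : Polynomial ℂ) with hd
  -- first divided difference of B
  obtain ⟨Q, hQ, hQa⟩ := div_step (B.map (C : ℂ →+* Polynomial ℂ)) (X : Polynomial ℂ)
  rw [eval_map_C_X] at hQ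
  rw [derivative_map, eval_map_C_X] at hQa
  -- second divided difference of B
  obtain ⟨Rq, hR, hRa⟩ := div_step Q (X : Polynomial ℂ)
  rw [hQa] at hR
  have hQ' : derivative (B.map (C : ℂ →+* Polynomial ℂ)) = Q + d * derivative Q := by
    have h := congrArg derivative hQ
    rw [derivative_sub, derivative_C, sub_zero, derivative_mul] at h
    rw [h, hd]; simp
  have hQ'' : (derivative (derivative B)) = 2 * (derivative Q).eval (X : Polynomial ℂ) := by
    have h := congrArg derivative hQ'
    rw [derivative_map, derivative_map] at h
    have h2 := congrArg (eval (X : Polynomial ℂ)) h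
    rw [eval_map_C_X] at h2
    rw [h2, hd]; simp [derivative_mul]; ring
  have hRval : 2 * Rq.eval (X : Polynomial ℂ) = derivative (derivative B) := by
    rw [hRa, hQ'']
  -- first divided difference of A
  obtain ⟨QA, hA, hAa⟩ := div_step (A.map (C : ℂ →+* Polynomial ℂ)) (X : Polynomial ℂ)
  rw [eval_map_C_X] at hA
  rw [derivative_map, eval_map_C_X] at hAa
  -- the bivariate polynomial
  set F : Polynomial (Polynomial ℂ) := C (C x) * Q - Rq - QA with hF
  -- evaluation ring hom
  set ev : ℂ → ℂ → (Polynomial (Polynomial ℂ) →+* ℂ) :=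
    fun y s => eval₂RingHom (evalRingHom s) y with hev
  -- conversion to MvPolynomial
  set φ : Polynomial (Polynomial ℂ) →+* MvPolynomial (Fin 2) ℂ :=
    eval₂RingHom (eval₂RingHom MvPolynomial.C (MvPolynomial.X 1)) (MvPolynomial.X 0) with hφ
  have key : ∀ (y s : ℂ) (p : Polynomial (Polynomial ℂ)),
      MvPolynomial.eval ![y, s] (φ p) = ev y s p := by
    intro y s p
    have inner : ((MvPolynomial.eval ![y, s]).comp φ).comp (C : Polynomial ℂ →+* _) =
        (ev y s).comp (C : Polynomial ℂ →+* _) := by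
      apply Polynomial.ringHom_ext
      · intro c; simp [hφ, hev]
      · simp [hφ, hev]
    have main : (MvPolynomial.eval ![y, s]).comp φ = ev y s := by
      apply Polynomial.ringHom_ext
      · intro a; exact RingHom.congr_fun inner a
      · simp [hφ, hev]
    exact RingHom.congr_fun main p
  -- eval facts
  have evC : ∀ (y s : ℂ) (p : Polynomial ℂ), ev y s (C p) = p.eval s := by
    intro y s p; simp [hev]
  have evMap : ∀ (y s : ℂ) (p : Polynomial ℂ),
      ev y s (p.map (C : ℂ →+* Polynomial ℂ)) = p.eval y := by
    intro y s p
    simp only [hev, coe_eval₂RingHom, eval₂_map]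
    have h : (evalRingHom s).comp (C : ℂ →+* Polynomial ℂ) = RingHom.id ℂ := by
      ext c; simp
    rw [h]; rfl
  have evd : ∀ (y s : ℂ), ev y s d = y - s := by
    intro y s; rw [hd]; simp [hev]
  have evDiag : ∀ (s : ℂ) (p : Polynomial (Polynomial ℂ)),
      ev s s p = (p.eval (X : Polynomial ℂ)).eval s := by
    intro s p
    have h := eval₂_at_apply (p := p) (evalRingHom s) (X : Polynomial ℂ)
    simp only [coe_evalRingHom, eval_X] at h
    simpa [hev] using h
  refine ⟨φ F, ?_, ?_⟩
  · intro y s hys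
    have hu : y - s ≠ 0 := sub_ne_zero.mpr hys
    rw [key]
    have e1 := congrArg (ev y s) hQ
    have e2 := congrArg (ev y s) hR
    have e3 := congrArg (ev y s) hA
    rw [map_sub, map_mul, evC, evMap, ← hd, evd] at e1
    rw [map_sub, map_mul, evC, ← hd, evd] at e2
    rw [map_sub, map_mul, evC, evMap, ← hd, evd] at e3
    set q := ev y s Q
    set r := ev y s Rq
    set qa := ev y s QA
    have hBy : B.eval y = (y - s) * q + B.eval s := by linear_combination e1
    have hB's : (derivative B).eval s = q - (y - s) * r := by linear_combination -e2
    have hAy : A.eval y = (y - s) * qa + A.eval s := by linear_combination e3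
    have hFv : ev y s F = x * q - r - qa := by
      rw [hF, map_sub, map_sub, map_mul, evC]; simp; rfl
    rw [hFv, hBy, hB's, hAy]
    field_simp
    ring
  · intro s
    rw [key, evDiag]
    rw [hF]
    simp only [eval_sub, eval_mul, eval_C, eval_add]
    rw [hQa, hAa]
    have hr : (Rq.eval (X : Polynomial ℂ)).eval s = (derivative (derivative B)).eval s / 2 := by
      have h := congrArg (eval s) hRval
      simp only [eval_mul, eval_ofNat] at h
      field_simp
      linear_combination h
    rw [hr]
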